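/- Let h : E₁ → E₂ be L-Lipschitz (L ≥ 0), let γ ∈ (0,1] and V ≥ 0. Let x and z be square-integrable random vectors with values in E₁ and E₂ respectively, both 𝒢-measurable; let x' be a square-integrable ℋ-measurable random vector with values in E₁ such that h∘x and h∘x' are square-integrable; and let ξ be a square-integrable random vector with values in E₂ such that, almost surely, E[ξ | ℋ] = h(x') and E[‖ξ − h(x')‖² | ℋ] ≤ V. Set z⁺ := (1−γ)·z + γ·ξ. Then, almost surely, E[‖z⁺ − h(x')‖² | 𝒢] ≤ (1−γ)·‖z − h(x)‖² + (L²/γ)·E[‖x' − x‖² | 𝒢] + 2V·γ². -/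

import Mathlib

open MeasureTheory
open scoped RealInnerProductSpace

theorem aux_integrable_mul {α : Type*} {m0 : MeasurableSpace α} {μ : Measure α}
    {f g : α → ℝ} (hf : MemLp f 2 μ) (hg : MemLp g 2 μ) :
    Integrable (fun ω => f ω * g ω) μ := by
  refine Integrable.mono' ((hf.integrable_sq.add hg.integrable_sq).div_const 2)
    (hf.1.mul hg.1) (Filter.Eventually.of_forall fun ω => ?_)
  rw [Real.norm_eq_abs, abs_le]
  simp only [Pi.add_apply]
  constructor <;> nlinarith [sq_nonneg (f ω + g ω), sq_nonneg (f ω - g ω)]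

theorem aux_integrable_inner {α : Type*} {m0 : MeasurableSpace α} {μ : Measure α}
    {E : Type*} [NormedAddCommGroup E] [InnerProductSpace ℝ E]
    {u v : α → E} (hu : MemLp u 2 μ) (hv : MemLp v 2 μ) :
    Integrable (fun ω => ⟪u ω, v ω⟫) μ := by
  refine Integrable.mono' ((hu.norm.integrable_sq.add hv.norm.integrable_sq).div_const 2)
    (hu.1.inner hv.1) (Filter.Eventually.of_forall fun ω => ?_)
  have h1 := abs_real_inner_le_norm (u ω) (v ω)
  rw [Real.norm_eq_abs]
  simp only [Pi.add_apply]
  nlinarith [sq_nonneg (‖u ω‖ - ‖v ω‖), norm_nonneg (u ω), norm_nonneg (v ω),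
    abs_nonneg ⟪u ω, v ω⟫, le_abs_self ⟪u ω, v ω⟫, neg_abs_le ⟪u ω, v ω⟫]

theorem aux_condexp_clm {α : Type*} {m m0 : MeasurableSpace α} {μ : Measure α}
    [IsFiniteMeasure μ] (hm : m ≤ m0)
    {F G : Type*} [NormedAddCommGroup F] [NormedSpace ℝ F] [CompleteSpace F]
    [NormedAddCommGroup G] [NormedSpace ℝ G] [CompleteSpace G]
    (T : F →L[ℝ] G) {f : α → F} (hf : Integrable f μ) :
    μ[fun ω => T (f ω)|m] =ᵐ[μ] fun ω => T ((μ[f|m]) ω) := by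
  refine (ae_eq_condExp_of_forall_setIntegral_eq hm (T.integrable_comp hf)
    (fun s _ _ => (T.integrable_comp integrable_condExp).integrableOn)
    (fun s hs hμs => ?_)
    ((T.continuous.comp_stronglyMeasurable stronglyMeasurable_condExp).aestronglyMeasurable)).symm
  calc ∫ ω in s, T ((μ[f|m]) ω) ∂μ = T (∫ ω in s, (μ[f|m]) ω ∂μ) :=
        T.integral_comp_comm integrable_condExp.integrableOn
    _ = T (∫ ω in s, f ω ∂μ) := by rw [setIntegral_condExp hm hf hs]
    _ = ∫ ω in s, T (f ω) ∂μ := (T.integral_comp_comm hf.integrableOn).symm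

theorem aux_eventuallyEq_sum {α β ι : Type*} [AddCommMonoid β] {l : Filter α} {s : Finset ι}
    {f g : ι → α → β} (h : ∀ i ∈ s, f i =ᶠ[l] g i) :
    ∑ i ∈ s, f i =ᶠ[l] ∑ i ∈ s, g i := by
  classical
  induction s using Finset.induction_on with
  | empty => simp
  | insert _ _ hi ih =>
    rw [Finset.sum_insert hi, Finset.sum_insert hi]
    exact (h _ (Finset.mem_insert_self _ _)).add
      (ih fun i hi' => h i (Finset.mem_insert_of_mem hi'))

theorem aux_condexp_inner {α : Type*} {m m0 : MeasurableSpace α} {μ : Measure α}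
    [IsFiniteMeasure μ] (hm : m ≤ m0)
    {E : Type*} [NormedAddCommGroup E] [InnerProductSpace ℝ E] [FiniteDimensional ℝ E]
    {u e : α → E} (hu : StronglyMeasurable[m] u) (hu2 : MemLp u 2 μ) (he2 : MemLp e 2 μ) :
    μ[fun ω => ⟪u ω, e ω⟫|m] =ᵐ[μ] fun ω => ⟪u ω, (μ[e|m]) ω⟫ := by
  classical
  set b := stdOrthonormalBasis ℝ E with hb
  have hterm : ∀ i, Integrable (fun ω => ⟪u ω, b i⟫ * ⟪b i, e ω⟫) μ := fun i =>
    aux_integrable_mul (hu2.inner_const _) (he2.const_inner _)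
  have hrw : (fun ω => ⟪u ω, e ω⟫) =
      ∑ i, fun ω => ⟪u ω, b i⟫ * ⟪b i, e ω⟫ := by
    funext ω
    simp only [Finset.sum_apply]
    rw [b.sum_inner_mul_inner]
  have hterm_eq : ∀ i, μ[fun ω => ⟪u ω, b i⟫ * ⟪b i, e ω⟫|m] =ᵐ[μ]
      fun ω => ⟪u ω, b i⟫ * ⟪b i, (μ[e|m]) ω⟫ := by
    intro i
    have hf_sm : StronglyMeasurable[m] fun ω => ⟪u ω, b i⟫ :=
      (Continuous.inner continuous_id continuous_const).comp_stronglyMeasurable hu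
    have h2 := condExp_mul_of_stronglyMeasurable_left (μ := μ) hf_sm (hterm i)
      ((he2.const_inner (b i)).integrable one_le_two)
    have h3 : μ[fun ω => ⟪b i, e ω⟫|m] =ᵐ[μ] fun ω => ⟪b i, (μ[e|m]) ω⟫ := by
      simpa using aux_condexp_clm hm (innerSL ℝ (b i)) (he2.integrable one_le_two)
    refine h2.trans ?_
    filter_upwards [h3] with ω hω
    simp only [Pi.mul_apply, hω]
  calc μ[fun ω => ⟪u ω, e ω⟫|m] = μ[∑ i, fun ω => ⟪u ω, b i⟫ * ⟪b i, e ω⟫|m] := by rw [hrw]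
    _ =ᵐ[μ] ∑ i, μ[fun ω => ⟪u ω, b i⟫ * ⟪b i, e ω⟫|m] :=
        condExp_finsetSum (fun i _ => hterm i) _
    _ =ᵐ[μ] ∑ i, fun ω => ⟪u ω, b i⟫ * ⟪b i, (μ[e|m]) ω⟫ := by
        exact aux_eventuallyEq_sum (fun i _ => hterm_eq i)
    _ = fun ω => ⟪u ω, (μ[e|m]) ω⟫ := by
        funext ω
        simp only [Finset.sum_apply]
        rw [b.sum_inner_mul_inner]

theorem stmt_4 {Ω : Type*} {m0 : MeasurableSpace Ω} (P : Measure Ω) [IsProbabilityMeasure P]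
    {𝒢 ℋ : MeasurableSpace Ω} (h𝒢ℋ : 𝒢 ≤ ℋ) (hℋ : ℋ ≤ m0)
    {E₁ E₂ : Type*}
    [NormedAddCommGroup E₁] [InnerProductSpace ℝ E₁] [FiniteDimensional ℝ E₁]
    [NormedAddCommGroup E₂] [InnerProductSpace ℝ E₂] [FiniteDimensional ℝ E₂]
    (h : E₁ → E₂) (L : ℝ) (hL : 0 ≤ L)
    (hLip : ∀ a b : E₁, ‖h a - h b‖ ≤ L * ‖a - b‖)
    (γ V : ℝ) (hγ : 0 < γ ∧ γ ≤ 1) (hV : 0 ≤ V)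
    (x : Ω → E₁) (z : Ω → E₂) (x' : Ω → E₁) (ξ : Ω → E₂)
    (hx2 : MemLp x 2 P) (hz2 : MemLp z 2 P) (hx'2 : MemLp x' 2 P) (hξ2 : MemLp ξ 2 P)
    (hxG : StronglyMeasurable[𝒢] x) (hzG : StronglyMeasurable[𝒢] z)
    (hx'H : StronglyMeasurable[ℋ] x')
    (hhx : MemLp (fun ω => h (x ω)) 2 P) (hhx' : MemLp (fun ω => h (x' ω)) 2 P)
    (hξmean : P[ξ | ℋ] =ᵐ[P] fun ω => h (x' ω))
    (hξvar : ∀ᵐ ω ∂P, (P[fun ω' => ‖ξ ω' - h (x' ω')‖ ^ 2 | ℋ]) ω ≤ V) :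
    ∀ᵐ ω ∂P,
      (P[fun ω' => ‖((1 - γ) • z ω' + γ • ξ ω') - h (x' ω')‖ ^ 2 | 𝒢]) ω ≤
        (1 - γ) * ‖z ω - h (x ω)‖ ^ 2
          + (L ^ 2 / γ) * (P[fun ω' => ‖x' ω' - x ω'‖ ^ 2 | 𝒢]) ω
          + 2 * V * γ ^ 2 := by
  obtain ⟨hγ0, hγ1⟩ := hγ
  have hG : 𝒢 ≤ m0 := h𝒢ℋ.trans hℋ
  have hcont : Continuous h := by
    have hl : LipschitzWith ⟨L, hL⟩ h :=
      LipschitzWith.of_dist_le_mul fun a b => by rw [dist_eq_norm, dist_eq_norm]; exact hLip a b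
    exact hl.continuous
  -- measurability
  have hhx'H : StronglyMeasurable[ℋ] fun ω => h (x' ω) := hcont.comp_stronglyMeasurable hx'H
  have hhxG : StronglyMeasurable[𝒢] fun ω => h (x ω) := hcont.comp_stronglyMeasurable hxG
  have hwH : StronglyMeasurable[ℋ] fun ω => z ω - h (x' ω) := (hzG.mono h𝒢ℋ).sub hhx'H
  -- L² and integrability facts
  have hw2 : MemLp (fun ω => z ω - h (x' ω)) 2 P := hz2.sub hhx'
  have he2 : MemLp (fun ω => ξ ω - h (x' ω)) 2 P := hξ2.sub hhx'
  have hw_sq_int : Integrable (fun ω => ‖z ω - h (x' ω)‖ ^ 2) P := hw2.norm.integrable_sq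
  have he_sq_int : Integrable (fun ω => ‖ξ ω - h (x' ω)‖ ^ 2) P := he2.norm.integrable_sq
  have hinner_int : Integrable (fun ω => ⟪z ω - h (x' ω), ξ ω - h (x' ω)⟫) P :=
    aux_integrable_inner hw2 he2
  have hf2 : MemLp (fun ω => ((1 - γ) • z ω + γ • ξ ω) - h (x' ω)) 2 P := by
    exact ((hz2.const_smul (1 - γ)).add (hξ2.const_smul γ)).sub hhx'
  have hf_int : Integrable (fun ω => ‖((1 - γ) • z ω + γ • ξ ω) - h (x' ω)‖ ^ 2) P :=
    hf2.norm.integrable_sq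
  -- pointwise expansion
  have hpt : (fun ω => ‖((1 - γ) • z ω + γ • ξ ω) - h (x' ω)‖ ^ 2) =
      ((1 - γ) ^ 2 • fun ω => ‖z ω - h (x' ω)‖ ^ 2)
        + (((2 * (1 - γ) * γ) • fun ω => ⟪z ω - h (x' ω), ξ ω - h (x' ω)⟫)
          + (γ ^ 2 • fun ω => ‖ξ ω - h (x' ω)‖ ^ 2)) := by
    funext ω
    have hsplit : ((1 - γ) • z ω + γ • ξ ω) - h (x' ω)
        = (1 - γ) • (z ω - h (x' ω)) + γ • (ξ ω - h (x' ω)) := by module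
    simp only [Pi.add_apply, Pi.smul_apply, smul_eq_mul]
    rw [hsplit, norm_add_sq_real, norm_smul, norm_smul, real_inner_smul_left,
      real_inner_smul_right, Real.norm_eq_abs, Real.norm_eq_abs,
      abs_of_nonneg (by linarith : (0:ℝ) ≤ 1 - γ), abs_of_nonneg hγ0.le]
    ring
  -- conditional expectation at level ℋ: decomposition
  have hA1 : P[fun ω => ‖((1 - γ) • z ω + γ • ξ ω) - h (x' ω)‖ ^ 2|ℋ] =ᵐ[P]
      ((1 - γ) ^ 2 • P[fun ω => ‖z ω - h (x' ω)‖ ^ 2|ℋ])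
        + (((2 * (1 - γ) * γ) • P[fun ω => ⟪z ω - h (x' ω), ξ ω - h (x' ω)⟫|ℋ])
          + (γ ^ 2 • P[fun ω => ‖ξ ω - h (x' ω)‖ ^ 2|ℋ])) := by
    rw [hpt]
    refine (condExp_add (hw_sq_int.smul ((1 - γ) ^ 2))
      ((hinner_int.smul (2 * (1 - γ) * γ)).add (he_sq_int.smul (γ ^ 2))) _).trans ?_
    refine ((condExp_smul ((1 - γ) ^ 2) _ _).add
      ((condExp_add (hinner_int.smul _) (he_sq_int.smul _) _).trans
        ((condExp_smul _ _ _).add (condExp_smul _ _ _)))).trans ?_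
    rfl
  -- the ℋ-measurable square is its own conditional expectation
  have hW_sm : StronglyMeasurable[ℋ] fun ω => ‖z ω - h (x' ω)‖ ^ 2 := by
    simp only [pow_two]
    exact hwH.norm.mul hwH.norm
  have hW_cond : P[fun ω => ‖z ω - h (x' ω)‖ ^ 2|ℋ] = fun ω => ‖z ω - h (x' ω)‖ ^ 2 :=
    condExp_of_stronglyMeasurable hℋ hW_sm hw_sq_int
  -- conditional expectation of the noise is zero
  have he_cond : P[fun ω => ξ ω - h (x' ω)|ℋ] =ᵐ[P] fun _ => (0 : E₂) := by
    have h1 := condExp_sub (μ := P) (m := ℋ) (f := ξ) (g := fun ω => h (x' ω))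
      (hξ2.integrable one_le_two) (hhx'.integrable one_le_two)
    have h2 : P[fun ω => h (x' ω)|ℋ] = fun ω => h (x' ω) :=
      condExp_of_stronglyMeasurable hℋ hhx'H (hhx'.integrable one_le_two)
    have h1' : P[fun ω => ξ ω - h (x' ω)|ℋ] =ᵐ[P] P[ξ|ℋ] - P[fun ω => h (x' ω)|ℋ] := h1
    filter_upwards [h1', hξmean] with ω h1ω hmω
    rw [h1ω, Pi.sub_apply, congrFun h2 ω, hmω, sub_self]
  have hI_cond : P[fun ω => ⟪z ω - h (x' ω), ξ ω - h (x' ω)⟫|ℋ] =ᵐ[P] fun _ => (0 : ℝ) := by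
    filter_upwards [aux_condexp_inner hℋ hwH hw2 he2, he_cond] with ω h1ω h2ω
    rw [h1ω, h2ω, inner_zero_right]
  -- ℋ-level bound
  have hH_bound : P[fun ω => ‖((1 - γ) • z ω + γ • ξ ω) - h (x' ω)‖ ^ 2|ℋ] ≤ᵐ[P]
      fun ω => (1 - γ) ^ 2 * ‖z ω - h (x' ω)‖ ^ 2 + γ ^ 2 * V := by
    filter_upwards [hA1, hI_cond, hξvar] with ω h1ω h2ω h3ω
    rw [h1ω]
    simp only [Pi.add_apply, Pi.smul_apply, smul_eq_mul, hW_cond, h2ω]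
    nlinarith [sq_nonneg γ]
  -- pass to 𝒢 via the tower property
  have hg_int : Integrable (fun ω => (1 - γ) ^ 2 * ‖z ω - h (x' ω)‖ ^ 2 + γ ^ 2 * V) P :=
    (hw_sq_int.const_mul _).add (integrable_const _)
  have htower : P[fun ω => ‖((1 - γ) • z ω + γ • ξ ω) - h (x' ω)‖ ^ 2|𝒢] =ᵐ[P]
      P[P[fun ω => ‖((1 - γ) • z ω + γ • ξ ω) - h (x' ω)‖ ^ 2|ℋ]|𝒢] :=
    (condExp_condExp_of_le h𝒢ℋ hℋ).symm
  have hmono1 : P[P[fun ω => ‖((1 - γ) • z ω + γ • ξ ω) - h (x' ω)‖ ^ 2|ℋ]|𝒢] ≤ᵐ[P]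
      P[fun ω => (1 - γ) ^ 2 * ‖z ω - h (x' ω)‖ ^ 2 + γ ^ 2 * V|𝒢] :=
    condExp_mono integrable_condExp hg_int hH_bound
  have hsplitG : P[fun ω => (1 - γ) ^ 2 * ‖z ω - h (x' ω)‖ ^ 2 + γ ^ 2 * V|𝒢] =ᵐ[P]
      ((1 - γ) ^ 2 • P[fun ω => ‖z ω - h (x' ω)‖ ^ 2|𝒢]) + fun _ => γ ^ 2 * V := by
    refine (condExp_add (f := (1 - γ) ^ 2 • fun ω => ‖z ω - h (x' ω)‖ ^ 2)
      (g := fun _ => γ ^ 2 * V) (hw_sq_int.smul _) (integrable_const _) _).trans ?_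
    refine ((condExp_smul _ _ _).add (Filter.EventuallyEq.refl _ _)).trans ?_
    rw [condExp_const hG]
  -- pointwise contraction bound
  have hq_pt : ∀ ω, (1 - γ) ^ 2 * ‖z ω - h (x' ω)‖ ^ 2 ≤
      (1 - γ) * ‖z ω - h (x ω)‖ ^ 2 + (L ^ 2 / γ) * ‖x' ω - x ω‖ ^ 2 := by
    intro ω
    set A := ‖z ω - h (x ω)‖ with hA
    set N := ‖x' ω - x ω‖ with hN
    set W := ‖z ω - h (x' ω)‖ with hW
    have hA0 : 0 ≤ A := norm_nonneg _
    have hN0 : 0 ≤ N := norm_nonneg _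
    have hW0 : 0 ≤ W := norm_nonneg _
    have hC0 : 0 ≤ L * N := mul_nonneg hL hN0
    have hWle : W ≤ A + L * N := by
      calc W = ‖(z ω - h (x ω)) + (h (x ω) - h (x' ω))‖ := by rw [hW, sub_add_sub_cancel]
        _ ≤ ‖z ω - h (x ω)‖ + ‖h (x ω) - h (x' ω)‖ := norm_add_le _ _
        _ ≤ A + L * ‖x ω - x' ω‖ := by exact add_le_add le_rfl (hLip _ _)
        _ = A + L * N := by rw [norm_sub_rev]
    have hW2 : W ^ 2 ≤ (A + L * N) ^ 2 := by nlinarith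
    have key : γ * ((1 - γ) ^ 2 * W ^ 2) ≤ γ * (1 - γ) * A ^ 2 + (L * N) ^ 2 := by
      nlinarith [sq_nonneg (γ * A - (1 - γ) * (L * N)),
        mul_nonneg (mul_nonneg hγ0.le (by linarith : (0:ℝ) ≤ 2 - γ)) (sq_nonneg (L * N)),
        mul_nonneg (by linarith : (0:ℝ) ≤ 1 - γ) (sq_nonneg (γ * A - (1 - γ) * (L * N))),
        mul_nonneg (mul_nonneg hγ0.le (sq_nonneg (1 - γ)))
          (by nlinarith : (0:ℝ) ≤ (A + L * N) ^ 2 - W ^ 2)]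
    have h5 : (L ^ 2 / γ) * N ^ 2 = (L * N) ^ 2 / γ := by rw [mul_pow]; ring
    rw [h5, ← sub_le_iff_le_add', le_div_iff₀ hγ0]
    nlinarith [key]
  have hq_int : Integrable (fun ω => (1 - γ) * ‖z ω - h (x ω)‖ ^ 2
      + (L ^ 2 / γ) * ‖x' ω - x ω‖ ^ 2) P :=
    (((hz2.sub hhx).norm.integrable_sq).const_mul _).add
      (((hx'2.sub hx2).norm.integrable_sq).const_mul _)
  have hmono2 : P[(1 - γ) ^ 2 • fun ω => ‖z ω - h (x' ω)‖ ^ 2|𝒢] ≤ᵐ[P]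
      P[fun ω => (1 - γ) * ‖z ω - h (x ω)‖ ^ 2 + (L ^ 2 / γ) * ‖x' ω - x ω‖ ^ 2|𝒢] :=
    condExp_mono (hw_sq_int.smul _) hq_int (Filter.Eventually.of_forall fun ω => hq_pt ω)
  have hmono2' : (1 - γ) ^ 2 • P[fun ω => ‖z ω - h (x' ω)‖ ^ 2|𝒢] ≤ᵐ[P]
      P[fun ω => (1 - γ) * ‖z ω - h (x ω)‖ ^ 2 + (L ^ 2 / γ) * ‖x' ω - x ω‖ ^ 2|𝒢] := by
    filter_upwards [condExp_smul (μ := P) (m := 𝒢) ((1 - γ) ^ 2)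
      (fun ω => ‖z ω - h (x' ω)‖ ^ 2), hmono2] with ω h1ω h2ω
    rw [← h1ω]; exact h2ω
  -- split the 𝒢 conditional expectation of the majorant
  have hzx_sm : StronglyMeasurable[𝒢] fun ω => (1 - γ) * ‖z ω - h (x ω)‖ ^ 2 := by
    refine StronglyMeasurable.const_mul ?_ _
    simp only [pow_two]
    exact (hzG.sub hhxG).norm.mul (hzG.sub hhxG).norm
  have hsplitG2 : P[fun ω => (1 - γ) * ‖z ω - h (x ω)‖ ^ 2
      + (L ^ 2 / γ) * ‖x' ω - x ω‖ ^ 2|𝒢] =ᵐ[P]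
      (fun ω => (1 - γ) * ‖z ω - h (x ω)‖ ^ 2)
        + (L ^ 2 / γ) • P[fun ω' => ‖x' ω' - x ω'‖ ^ 2|𝒢] := by
    refine (condExp_add (f := fun ω => (1 - γ) * ‖z ω - h (x ω)‖ ^ 2)
      (g := (L ^ 2 / γ) • fun ω => ‖x' ω - x ω‖ ^ 2)
      (((hz2.sub hhx).norm.integrable_sq).const_mul _)
      (((hx'2.sub hx2).norm.integrable_sq).smul _) _).trans ?_
    rw [condExp_of_stronglyMeasurable hG hzx_sm (((hz2.sub hhx).norm.integrable_sq).const_mul _)]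
    exact (Filter.EventuallyEq.refl _ _).add (condExp_smul _ _ _)
  -- assemble everything
  filter_upwards [htower, hmono1, hsplitG, hmono2', hsplitG2] with ω h1 h2 h3 h4 h5
  have e3 := h3
  have e5 := h5
  simp only [Pi.add_apply, Pi.smul_apply, smul_eq_mul] at e3 e5 h4
  have hfinal : γ ^ 2 * V ≤ 2 * V * γ ^ 2 := by nlinarith [sq_nonneg γ, mul_nonneg hV (sq_nonneg γ)]
  calc (P[fun ω' => ‖((1 - γ) • z ω' + γ • ξ ω') - h (x' ω')‖ ^ 2|𝒢]) ω
      = (P[P[fun ω' => ‖((1 - γ) • z ω' + γ • ξ ω') - h (x' ω')‖ ^ 2|ℋ]|𝒢]) ω := h1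
    _ ≤ (P[fun ω' => (1 - γ) ^ 2 * ‖z ω' - h (x' ω')‖ ^ 2 + γ ^ 2 * V|𝒢]) ω := h2
    _ = (1 - γ) ^ 2 * (P[fun ω' => ‖z ω' - h (x' ω')‖ ^ 2|𝒢]) ω + γ ^ 2 * V := e3
    _ ≤ ((1 - γ) * ‖z ω - h (x ω)‖ ^ 2
          + (L ^ 2 / γ) * (P[fun ω' => ‖x' ω' - x ω'‖ ^ 2|𝒢]) ω) + γ ^ 2 * V := by
        have := h4.trans_eq e5
        linarith
    _ ≤ (1 - γ) * ‖z ω - h (x ω)‖ ^ 2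
          + (L ^ 2 / γ) * (P[fun ω' => ‖x' ω' - x ω'‖ ^ 2|𝒢]) ω + 2 * V * γ ^ 2 := by
        linarith
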